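/- Let k ≥ 2 be even, Γ a finite abelian group, and S ⊆ Γ a symmetric set with 0 ∉ (k+1)S and R_k(S) = Γ \ (S ∪ {0}). Then any two non-adjacent distinct vertices of the Cayley graph Cay(Γ, S) are joined by a path of length exactly k. -/

import Mathlib

open Pointwise

/-- The `m`-fold sumset of `S`. -/
def foldSum {Γ : Type*} [AddCommGroup Γ] (m : ℕ) (S : Set Γ) : Set Γ :=
  {x | ∃ s : Fin m → Γ, (∀ i, s i ∈ S) ∧ ∑ i, s i = x}

/-- `R_m(S)`: sums of `m` elements of `S` admitting an ordering with no
consecutive sub-sum (of length at least two) equal to `0`. -/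
def Rset {Γ : Type*} [AddCommGroup Γ] (m : ℕ) (S : Set Γ) : Set Γ :=
  {x | ∃ s : Fin m → Γ, (∀ i, s i ∈ S) ∧
    (∀ i j : Fin m, i < j → ∑ t ∈ Finset.Icc i j, s t ≠ 0) ∧ ∑ i, s i = x}

/-- The Cayley graph of a symmetric connection set `S`. -/
def cayley {Γ : Type*} [AddCommGroup Γ] (S : Set Γ) : SimpleGraph Γ :=
  SimpleGraph.fromRel (fun g h => g - h ∈ S)

lemma chain_walk {Γ : Type*} {G : SimpleGraph Γ} :
    ∀ (n : ℕ) (v : ℕ → Γ), (∀ i, i < n → G.Adj (v i) (v (i+1))) →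
    ∃ p : G.Walk (v 0) (v n), p.length = n ∧ p.support = (List.range (n+1)).map v := by
  intro n
  induction n with
  | zero => exact fun v _ => ⟨.nil, rfl, by simp [List.range_succ]⟩
  | succ n ih =>
    intro v hv
    obtain ⟨p, hl, hs⟩ := ih (fun i => v (i+1)) (fun i hi => hv (i+1) (by omega))
    refine ⟨.cons (hv 0 (by omega)) p, by simp [hl], ?_⟩
    simp [SimpleGraph.Walk.support_cons, hs, List.range_succ_eq_map, List.map_map,
      Function.comp, Nat.succ_eq_add_one]

theorem stmt2 {Γ : Type*} [AddCommGroup Γ] [Finite Γ] (k : ℕ) (hk : 2 ≤ k)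
    (hke : Even k) (S : Set Γ) (hsymm : S = -S)
    (h0 : (0 : Γ) ∉ foldSum (k + 1) S)
    (hR : Rset k S = (S ∪ {0})ᶜ) :
    ∀ x y : Γ, x ≠ y → ¬ (cayley S).Adj x y →
      ∃ p : (cayley S).Walk x y, p.IsPath ∧ p.length = k := by
  intro x y hxy hadj
  have h0S : (0 : Γ) ∉ S := fun h => h0 ⟨fun _ => 0, fun _ => h, by simp⟩
  have hxyS : x - y ∉ S := by
    intro h
    exact hadj ((SimpleGraph.fromRel_adj _ _ _).2 ⟨hxy, Or.inl h⟩)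
  have hmem : x - y ∈ Rset k S := by
    rw [hR]
    intro h
    rcases h with h | h
    · exact hxyS h
    · exact hxy (by rwa [Set.mem_singleton_iff, sub_eq_zero] at h)
  obtain ⟨s, hsS, hcon, hsum⟩ := hmem
  set s' : ℕ → Γ := fun t => if h : t < k then s ⟨t, h⟩ else 0 with hs'
  set v : ℕ → Γ := fun i => x - ∑ t ∈ Finset.range i, s' t with hv
  have hv0 : v 0 = x := by simp [hv]
  have hvk : v k = y := by
    have hsk : ∑ t ∈ Finset.range k, s' t = x - y := by
      rw [Finset.sum_range, ← hsum]
      exact Finset.sum_congr rfl fun i _ => by simp [hs', i.isLt]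
    simp [hv, hsk]
  have hdiff : ∀ i, v i - v (i+1) = s' i := by
    intro i
    simp only [hv, Finset.sum_range_succ]
    abel
  have hs'S : ∀ i, i < k → s' i ∈ S := by
    intro i hi
    simp only [hs', dif_pos hi]
    exact hsS _
  have hadjv : ∀ i, i < k → (cayley S).Adj (v i) (v (i+1)) := by
    intro i hi
    refine (SimpleGraph.fromRel_adj _ _ _).2 ⟨?_, Or.inl (by rw [hdiff]; exact hs'S i hi)⟩
    intro h
    apply h0S
    have := hdiff i
    rw [h, sub_self] at this
    rw [this]
    exact hs'S i hi
  have hinj : ∀ i j, i < j → j ≤ k → v i ≠ v j := by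
    intro i j hij hjk h
    have hsum0 : ∑ t ∈ Finset.Ico i j, s' t = 0 := by
      have h2 : ∑ t ∈ Finset.range j, s' t = ∑ t ∈ Finset.range i, s' t := by
        simpa [hv, sub_right_inj] using h.symm
      rw [Finset.sum_Ico_eq_sub _ hij.le, h2, sub_self]
    rcases eq_or_lt_of_le (Nat.succ_le_of_lt hij) with heq | hlt
    · rw [← heq] at hsum0
      simp only [Finset.sum_Ico_succ_top (le_refl i), Finset.Ico_self,
        Finset.sum_empty, zero_add] at hsum0
      exact h0S (hsum0 ▸ hs'S i (by omega))
    · have hi : i < k := by omega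
      have hj1 : j - 1 < k := by omega
      have hfin : (⟨i, hi⟩ : Fin k) < ⟨j - 1, hj1⟩ := by
        rw [Fin.mk_lt_mk]
        omega
      apply hcon ⟨i, hi⟩ ⟨j - 1, hj1⟩ hfin
      rw [← hsum0]
      calc ∑ t ∈ Finset.Icc (⟨i, hi⟩ : Fin k) ⟨j - 1, hj1⟩, s t
          = ∑ t ∈ (Finset.Icc (⟨i, hi⟩ : Fin k) ⟨j - 1, hj1⟩).map Fin.valEmbedding, s' t := by
            rw [Finset.sum_map]
            exact Finset.sum_congr rfl fun t _ => by simp [hs', t.isLt]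
        _ = ∑ t ∈ Finset.Icc i (j - 1), s' t := by rw [Fin.map_valEmbedding_Icc]
        _ = ∑ t ∈ Finset.Ico i j, s' t := by
            have hIco : Finset.Ico i j = Finset.Icc i (j - 1) := by
              ext t
              simp only [Finset.mem_Ico, Finset.mem_Icc]
              omega
            rw [hIco]
  obtain ⟨p, hl, hsupp⟩ := chain_walk k v hadjv
  refine ⟨p.copy hv0 hvk, ?_, by simp [hl]⟩
  rw [SimpleGraph.Walk.isPath_def, SimpleGraph.Walk.support_copy, hsupp]
  refine List.Nodup.map_on ?_ List.nodup_range
  intro i hi j hj hvij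
  rw [List.mem_range] at hi hj
  rcases lt_trichotomy i j with h | h | h
  · exact absurd hvij (hinj i j h (by omega))
  · exact h
  · exact absurd hvij.symm (hinj j i h (by omega))
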